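/- Γₙ is the disjoint union of the sets Λ¹, Λ², …, Λⁿ, Λⁿ⁺¹; that is, every element of Γₙ lies in exactly one of these sets, and their union is Γₙ. -/

import Mathlib

/-- A numerical semigroup: an additive submonoid of ℕ with finite complement. -/
def IsNumericalSemigroup (Γ : Set ℕ) : Prop :=
  0 ∈ Γ ∧ (∀ x ∈ Γ, ∀ y ∈ Γ, x + y ∈ Γ) ∧ Γᶜ.Finite

/-- The inductive numerical semigroups Γ₀ = ℕ, Γᵢ = aᵢ·Γ_{i-1} ∪ (aᵢbᵢ + ℕ). -/
def IndSG (a b : ℕ → ℕ) : ℕ → Set ℕ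
  | 0 => Set.univ
  | i + 1 => (fun x => a (i + 1) * x) '' IndSG a b i ∪ {x | a (i + 1) * b (i + 1) ≤ x}

open Finset in
/-- bottom split of Icc product -/
lemma prodIcc_bot {a : ℕ → ℕ} {k n : ℕ} (h : k ≤ n) :
    ∏ j ∈ Finset.Icc k n, a j = a k * ∏ j ∈ Finset.Icc (k+1) n, a j := by
  rw [← Finset.Ico_add_one_right_eq_Icc, Finset.prod_eq_prod_Ico_succ_bot (show k < n + 1 by omega),
    Finset.Ico_add_one_right_eq_Icc]

/-- representation of the top element b i * a i -/
lemma rep_top (n : ℕ) (a b : ℕ → ℕ)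
    (hb : ∀ i, 1 ≤ i → i + 1 ≤ n → a i * b i ≤ b (i + 1)) :
    ∀ i, 1 ≤ i → i ≤ n → ∃ k, 1 ≤ k ∧ k ≤ i ∧
      b i * a i = b k * ∏ j ∈ Finset.Icc k i, a j ∧
      (k = 1 ∨ (2 ≤ k ∧ a (k-1) * b (k-1) < b k)) := by
  intro i hi
  induction i, hi using Nat.le_induction with
  | base => intro _; exact ⟨1, le_refl _, le_refl _, by simp, Or.inl rfl⟩
  | succ i hi ih =>
    intro hin
    rcases lt_or_eq_of_le (hb i hi hin) with hlt | heq
    · exact ⟨i+1, by omega, le_refl _, by simp, Or.inr ⟨by omega, by simpa using hlt⟩⟩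
    · obtain ⟨k, hk1, hki, hrep, hcond⟩ := ih (by omega)
      refine ⟨k, hk1, by omega, ?_, hcond⟩
      rw [Finset.prod_Icc_succ_top (by omega), ← mul_assoc, ← hrep, ← heq]; ring


/-- characterization of the inductive semigroup -/
lemma key_char (n : ℕ) (a b : ℕ → ℕ)
    (ha : ∀ i, 1 ≤ i → i ≤ n → 2 ≤ a i)
    (hb : ∀ i, 1 ≤ i → i + 1 ≤ n → a i * b i ≤ b (i + 1)) :
    ∀ i, 1 ≤ i → i ≤ n → ∀ x, x ∈ IndSG a b i ↔
      ((∃ k m, 1 ≤ k ∧ k ≤ i ∧ x = m * ∏ j ∈ Finset.Icc k i, a j ∧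
        ((k = 1 ∧ m ≤ b 1) ∨ (2 ≤ k ∧ a (k-1) * b (k-1) < m ∧ m ≤ b k)))
        ∨ a i * b i < x) := by
  intro i hi
  induction i, hi using Nat.le_induction with
  | base =>
    intro h1n x
    have ha1 : 2 ≤ a 1 := ha 1 le_rfl h1n
    show x ∈ (fun y => a 1 * y) '' IndSG a b 0 ∪ {y | a 1 * b 1 ≤ y} ↔ _
    simp only [IndSG, Set.image_univ, Set.mem_union, Set.mem_range, Set.mem_setOf_eq]
    constructor
    · rintro (⟨m, rfl⟩ | hle)
      · rcases le_or_gt m (b 1) with h | h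
        · exact Or.inl ⟨1, m, le_refl _, le_refl _, by simp [mul_comm], Or.inl ⟨rfl, h⟩⟩
        · exact Or.inr ((Nat.mul_lt_mul_left (by omega : 0 < _)).mpr h)
      · rcases lt_or_eq_of_le hle with h | h
        · exact Or.inr h
        · exact Or.inl ⟨1, b 1, le_refl _, le_refl _, by simp [mul_comm, ← h],
            Or.inl ⟨rfl, le_refl _⟩⟩
    · rintro (⟨k, m, hk1, hki, rfl, _⟩ | hlt)
      · interval_cases k
        exact Or.inl ⟨m, by simp [mul_comm]⟩
      · exact Or.inr (le_of_lt hlt)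
  | succ i hi ih =>
    intro hin x
    have hIH := ih (by omega)
    have hai : 2 ≤ a (i+1) := ha (i+1) (by omega) hin
    show x ∈ (fun y => a (i+1) * y) '' IndSG a b i ∪ {y | a (i+1) * b (i+1) ≤ y} ↔ _
    simp only [Set.mem_union, Set.mem_image, Set.mem_setOf_eq]
    constructor
    · rintro (⟨y, hy, rfl⟩ | hle)
      · rcases (hIH y).mp hy with ⟨k, m, hk1, hki, rfl, hcond⟩ | hlt
        · refine Or.inl ⟨k, m, hk1, by omega, ?_, hcond⟩
          rw [Finset.prod_Icc_succ_top (by omega)]; ring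
        · rcases le_or_gt y (b (i+1)) with h | h
          · exact Or.inl ⟨i+1, y, by omega, le_refl _, by simp [mul_comm],
              Or.inr ⟨by omega, by simpa using hlt, h⟩⟩
          · exact Or.inr ((Nat.mul_lt_mul_left (by omega : 0 < _)).mpr h)
      · rcases lt_or_eq_of_le hle with h | h
        · exact Or.inr h
        · obtain ⟨k, hk1, hki, hrep, hcond⟩ := rep_top n a b hb (i+1) (by omega) hin
          refine Or.inl ⟨k, b k, hk1, hki, by rw [← h, mul_comm (a (i+1)), hrep], ?_⟩
          rcases hcond with h1 | ⟨h2, h3⟩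
          · exact Or.inl ⟨h1, by rw [h1]⟩
          · exact Or.inr ⟨h2, h3, le_refl _⟩
    · rintro (⟨k, m, hk1, hki, rfl, hcond⟩ | hlt)
      · rcases Nat.lt_or_ge k (i+1) with hk | hk
        · refine Or.inl ⟨m * ∏ j ∈ Finset.Icc k i, a j, ?_, ?_⟩
          · exact (hIH _).mpr (Or.inl ⟨k, m, hk1, by omega, rfl, hcond⟩)
          · rw [Finset.prod_Icc_succ_top (by omega)]; ring
        · have hk' : k = i + 1 := by omega
          subst hk'
          rcases hcond with ⟨h1, _⟩ | ⟨_, h3, _⟩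
          · omega
          · refine Or.inl ⟨m, (hIH m).mpr (Or.inr (by simpa using h3)), by simp [mul_comm]⟩
      · exact Or.inr (le_of_lt hlt)

lemma g_mono (n : ℕ) (a b : ℕ → ℕ)
    (hb : ∀ i, 1 ≤ i → i + 1 ≤ n → a i * b i ≤ b (i + 1)) :
    ∀ j k, 1 ≤ j → j ≤ k → k ≤ n →
      b j * ∏ t ∈ Finset.Icc j n, a t ≤ b k * ∏ t ∈ Finset.Icc k n, a t := by
  intro j k hj hjk
  induction k, hjk using Nat.le_induction with
  | base => intro _; exact le_refl _
  | succ k hk ih =>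
    intro hkn
    refine le_trans (ih (by omega)) ?_
    rw [prodIcc_bot (by omega : k ≤ n), ← mul_assoc]
    exact Nat.mul_le_mul_right _ (by rw [mul_comm]; exact hb k (by omega) hkn)
theorem stmt0 (n : ℕ) (hn : 1 ≤ n) (a b : ℕ → ℕ)
    (ha : ∀ i, 1 ≤ i → i ≤ n → 2 ≤ a i)
    (hb1 : 1 ≤ b 1)
    (hb : ∀ i, 1 ≤ i → i + 1 ≤ n → a i * b i ≤ b (i + 1))
    (A lam : ℕ → ℕ)
    (hA : ∀ i, A i = ∏ j ∈ Finset.Icc i n, a j)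
    (hlam1 : lam 1 = b 1)
    (hlam : ∀ i, 2 ≤ i → i ≤ n → lam i = b i - a (i - 1) * b (i - 1))
    (Λ : ℕ → Set ℕ)
    (hΛ1 : Λ 1 = {x | ∃ m, m ≤ lam 1 ∧ x = m * A 1})
    (hΛk : ∀ k, 2 ≤ k → k ≤ n →
      Λ k = {x | ∃ m, 1 ≤ m ∧ m ≤ lam k ∧ x = b (k - 1) * A (k - 1) + m * A k})
    (hΛn1 : Λ (n + 1) = {x | a n * b n + 1 ≤ x}) :
    ∀ x, x ∈ IndSG a b n ↔ ∃! k, (1 ≤ k ∧ k ≤ n + 1) ∧ x ∈ Λ k := by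
  -- basic facts about A
  have hApos : ∀ k, 1 ≤ k → 0 < A k := by
    intro k hk
    rw [hA]
    apply Finset.prod_pos
    intro j hj
    rw [Finset.mem_Icc] at hj
    have := ha j (le_trans hk hj.1) hj.2; omega
  have hAsplit : ∀ k, 2 ≤ k → k ≤ n → A (k-1) = a (k-1) * A k := by
    intro k hk2 hkn
    have e : k - 1 + 1 = k := by omega
    rw [hA, hA, prodIcc_bot (by omega : k - 1 ≤ n), e]
  have hAn : A n = a n := by rw [hA]; simp
  have hbk : ∀ k, 2 ≤ k → k ≤ n → a (k-1) * b (k-1) ≤ b k := by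
    intro k hk2 hkn
    have := hb (k-1) (by omega) (by omega)
    rwa [Nat.sub_add_cancel (by omega)] at this
  -- upper bound on Λ k
  have hUB : ∀ k x, 1 ≤ k → k ≤ n → x ∈ Λ k → x ≤ b k * A k := by
    intro k x hk1 hkn hx
    rcases Nat.lt_or_ge k 2 with hk | hk
    · have hk' : k = 1 := by omega
      subst hk'
      rw [hΛ1] at hx
      obtain ⟨m, hm, rfl⟩ := hx
      rw [hlam1] at hm
      exact Nat.mul_le_mul_right _ hm
    · rw [hΛk k hk hkn] at hx
      obtain ⟨m, hm1, hm2, rfl⟩ := hx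
      rw [hlam k hk hkn] at hm2
      have hc := hbk k hk hkn
      rw [hAsplit k hk hkn]
      have h1 : b (k-1) * (a (k-1) * A k) = a (k-1) * b (k-1) * A k := by ring
      rw [h1]
      calc a (k-1) * b (k-1) * A k + m * A k
          ≤ a (k-1) * b (k-1) * A k + (b k - a (k-1) * b (k-1)) * A k :=
            Nat.add_le_add_left (Nat.mul_le_mul_right _ hm2) _
        _ = b k * A k := by rw [← Nat.add_mul, Nat.add_sub_cancel' hc]
  -- lower bound on Λ k
  have hLB : ∀ k x, 2 ≤ k → k ≤ n → x ∈ Λ k → b (k-1) * A (k-1) < x := by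
    intro k x hk2 hkn hx
    rw [hΛk k hk2 hkn] at hx
    obtain ⟨m, hm1, _, rfl⟩ := hx
    have : 0 < m * A k := Nat.mul_pos hm1 (hApos k (by omega))
    omega
  -- monotonicity of k ↦ b k * A k
  have hmono : ∀ j k, 1 ≤ j → j ≤ k → k ≤ n → b j * A j ≤ b k * A k := by
    intro j k hj hjk hkn
    rw [hA, hA]
    exact g_mono n a b hb j k hj hjk hkn
  -- pairwise disjointness of the Λ k
  have hdisj : ∀ j k x, 1 ≤ j → j < k → k ≤ n + 1 → x ∈ Λ j → x ∈ Λ k → False := by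
    intro j k x hj hjk hkn hxj hxk
    have h1 : x ≤ b j * A j := hUB j x hj (by omega) hxj
    have h2 : b j * A j ≤ b (k-1) * A (k-1) := hmono j (k-1) hj (by omega) (by omega)
    have h3 : b (k-1) * A (k-1) < x := by
      rcases Nat.lt_or_ge k (n+1) with hk | hk
      · exact hLB k x (by omega) (by omega) hxk
      · have hk' : k = n + 1 := by omega
        subst hk'
        rw [hΛn1] at hxk
        simp only [Set.mem_setOf_eq] at hxk
        have e : n + 1 - 1 = n := by omega
        rw [e, hAn, Nat.mul_comm]
        omega
    omega
  -- from representation to Λ membership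
  have hrepΛ : ∀ k m x, 1 ≤ k → k ≤ n → x = m * A k →
      ((k = 1 ∧ m ≤ b 1) ∨ (2 ≤ k ∧ a (k-1) * b (k-1) < m ∧ m ≤ b k)) → x ∈ Λ k := by
    rintro k m x hk1 hkn rfl hcond
    rcases hcond with ⟨rfl, hm⟩ | ⟨hk2, hm1, hm2⟩
    · rw [hΛ1]
      exact ⟨m, by rw [hlam1]; exact hm, rfl⟩
    · rw [hΛk k hk2 hkn]
      refine ⟨m - a (k-1) * b (k-1), by omega, ?_, ?_⟩
      · rw [hlam k hk2 hkn]; omega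
      · rw [hAsplit k hk2 hkn]
        have h1 : b (k-1) * (a (k-1) * A k) = a (k-1) * b (k-1) * A k := by ring
        rw [h1, ← Nat.add_mul, Nat.add_sub_cancel' (le_of_lt hm1)]
  -- from Λ membership to representation
  have hΛrep : ∀ k x, 1 ≤ k → k ≤ n → x ∈ Λ k → ∃ m, x = m * A k ∧
      ((k = 1 ∧ m ≤ b 1) ∨ (2 ≤ k ∧ a (k-1) * b (k-1) < m ∧ m ≤ b k)) := by
    intro k x hk1 hkn hx
    rcases Nat.lt_or_ge k 2 with hk | hk2
    · have hk' : k = 1 := by omega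
      subst hk'
      rw [hΛ1] at hx
      obtain ⟨m, hm, rfl⟩ := hx
      rw [hlam1] at hm
      exact ⟨m, rfl, Or.inl ⟨rfl, hm⟩⟩
    · rw [hΛk k hk2 hkn] at hx
      obtain ⟨m, hm1, hm2, rfl⟩ := hx
      rw [hlam k hk2 hkn] at hm2
      have hc := hbk k hk2 hkn
      refine ⟨a (k-1) * b (k-1) + m, ?_, Or.inr ⟨hk2, by omega, by omega⟩⟩
      rw [hAsplit k hk2 hkn]
      ring
  -- main proof
  intro x
  have hkey := key_char n a b ha hb n hn le_rfl x
  constructor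
  · intro hx
    have hex : ∃ k, 1 ≤ k ∧ k ≤ n + 1 ∧ x ∈ Λ k := by
      rcases hkey.mp hx with ⟨k, m, hk1, hkn, hrep, hcond⟩ | htail
      · exact ⟨k, hk1, by omega, hrepΛ k m x hk1 hkn (by rw [hrep, hA]) hcond⟩
      · exact ⟨n+1, by omega, le_refl _, by rw [hΛn1]; exact htail⟩
    obtain ⟨k, hk1, hkn, hxk⟩ := hex
    refine ⟨k, ⟨⟨hk1, hkn⟩, hxk⟩, ?_⟩
    rintro k' ⟨⟨hk'1, hk'n⟩, hxk'⟩
    rcases lt_trichotomy k' k with h | h | h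
    · exact absurd (hdisj k' k x hk'1 h hkn hxk' hxk) id
    · exact h
    · exact absurd (hdisj k k' x hk1 h hk'n hxk hxk') id
  · rintro ⟨k, ⟨⟨hk1, hkn⟩, hxk⟩, -⟩
    apply hkey.mpr
    rcases Nat.lt_or_ge k (n+1) with hk | hk
    · obtain ⟨m, hrep, hcond⟩ := hΛrep k x hk1 (by omega) hxk
      exact Or.inl ⟨k, m, hk1, by omega, by rw [hrep, hA], hcond⟩
    · have hk' : k = n + 1 := by omega
      subst hk'
      rw [hΛn1] at hxk
      exact Or.inr hxk
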